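/- Let E be a row-finite directed graph. The maps φ : 𝓗 → 𝓛(M_E) and ψ : 𝓛(M_E) → 𝓗, where φ(H) is the order-ideal of M_E generated by { a_v : v ∈ H } and ψ(I) = { v ∈ E⁰ : a_v ∈ I }, are order-preserving (with respect to inclusion) and mutually inverse bijections between the set 𝓗 of hereditary saturated subsets of E⁰ and the set 𝓛(M_E) of order-ideals of M_E. -/

import Mathlib

/-- A row-finite directed graph: vertex set `V`, edge set `Edge`,
source and range maps, with every vertex emitting finitely many edges. -/
structure RFGraph where
  V : Type
  Edge : Type
  s : Edge → V
  r : Edge → V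
  rowFinite : ∀ v : V, {e : Edge | s e = v}.Finite

namespace RFGraph

/-- The free abelian monoid on the vertex set. -/
abbrev F (G : RFGraph) : Type := G.V →₀ ℕ

/-- `v` emits at least one edge. -/
def emits (G : RFGraph) (v : G.V) : Prop := ∃ e : G.Edge, G.s e = v

/-- `𝐫(v) = Σ_{e ∈ s⁻¹(v)} r(e)` in the free abelian monoid. -/
noncomputable def rr (G : RFGraph) (v : G.V) : G.F :=
  ∑ e ∈ (G.rowFinite v).toFinset, Finsupp.single (G.r e) 1

/-- The one-step relation `→₁`: `α →₁ β` iff `α = x + α'` for a vertex `x`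
emitting at least one edge, and `β = 𝐫(x) + α'`. -/
def step (G : RFGraph) (α β : G.F) : Prop :=
  ∃ (x : G.V) (α' : G.F), G.emits x ∧ α = Finsupp.single x 1 + α' ∧ β = G.rr x + α'

/-- The reflexive-transitive closure `→` of `→₁`. -/
def steps (G : RFGraph) : G.F → G.F → Prop := Relation.ReflTransGen G.step

/-- The additive congruence `∼` on `F_E` generated by `→₁`. -/
noncomputable def graphCon (G : RFGraph) : AddCon G.F := addConGen G.step

/-- The graph monoid `M_E = F_E/∼`. -/
abbrev M (G : RFGraph) : Type := G.graphCon.Quotient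

/-- The class `a_v` of a vertex `v` in the graph monoid. -/
noncomputable def av (G : RFGraph) (v : G.V) : G.M := G.graphCon.mk' (Finsupp.single v 1)

end RFGraph

namespace RFGraph

/-- `v ≥ w`: there is a (possibly empty) directed path from `v` to `w`. -/
def reaches (G : RFGraph) : G.V → G.V → Prop :=
  Relation.ReflTransGen (fun a b => ∃ e : G.Edge, G.s e = a ∧ G.r e = b)

/-- A subset of the vertices is hereditary. -/
def Hereditary (G : RFGraph) (H : Set G.V) : Prop :=
  ∀ v w : G.V, v ∈ H → G.reaches v w → w ∈ H

/-- A subset of the vertices is saturated. -/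
def Saturated (G : RFGraph) (H : Set G.V) : Prop :=
  ∀ v : G.V, G.emits v → (∀ e : G.Edge, G.s e = v → G.r e ∈ H) → v ∈ H

/-- An order-ideal of the graph monoid: a submonoid `I` such that
`x + y ∈ I` implies `x ∈ I` and `y ∈ I`. -/
def IsOrderIdeal (G : RFGraph) (I : Set G.M) : Prop :=
  (0 : G.M) ∈ I ∧ (∀ x y : G.M, x ∈ I → y ∈ I → x + y ∈ I) ∧
    (∀ x y : G.M, x + y ∈ I → x ∈ I ∧ y ∈ I)

/-- The order-ideal generated by a subset of the graph monoid. -/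
def genOI (G : RFGraph) (S : Set G.M) : Set G.M :=
  ⋂₀ {I : Set G.M | G.IsOrderIdeal I ∧ S ⊆ I}

end RFGraph

namespace RFGraph

/-- `φ(H)`: the order-ideal of `M_E` generated by `{a_v : v ∈ H}`. -/
def phiMap (G : RFGraph) (H : Set G.V) : Set G.M := G.genOI (G.av '' H)

/-- `ψ(I) = {v ∈ E⁰ : a_v ∈ I}`. -/
def psiMap (G : RFGraph) (I : Set G.M) : Set G.V := {v : G.V | G.av v ∈ I}

end RFGraph

namespace RFGraph

variable {G : RFGraph}

/-! ### Basic finsupp helpers -/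

lemma add_left_cancelF {a b c : G.F} (h : a + b = a + c) : b = c := by
  ext w
  have := congrArg (fun f : G.F => f w) h
  simp only [Finsupp.add_apply] at this
  omega

lemma split_single (α : G.F) (x : G.V) (h : α x ≠ 0) :
    α = Finsupp.single x 1 + (α - Finsupp.single x 1) := by
  ext w
  rw [Finsupp.add_apply, Finsupp.tsub_apply]
  rcases eq_or_ne w x with rfl | hw
  · rw [Finsupp.single_eq_same]; omega
  · rw [Finsupp.single_eq_of_ne' (Ne.symm hw)]; omega

/-! ### Step relation basics -/

lemma step_add {α β : G.F} (h : G.step α β) (γ : G.F) : G.step (α + γ) (β + γ) := by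
  obtain ⟨x, α', hx, h1, h2⟩ := h
  subst h1; subst h2
  refine ⟨x, α' + γ, hx, ?_, ?_⟩ <;> abel

lemma steps_add {α β : G.F} (h : G.steps α β) (γ : G.F) : G.steps (α + γ) (β + γ) :=
  Relation.ReflTransGen.lift (fun f => f + γ) (fun _ _ hs => step_add hs γ) _ _ h

lemma steps_add_add {α α' β β' : G.F} (h1 : G.steps α α') (h2 : G.steps β β') :
    G.steps (α + β) (α' + β') := by
  refine (steps_add h1 β).trans ?_
  rw [add_comm α' β, add_comm α' β']
  exact steps_add h2 α'

lemma diamond {α β γ : G.F} (h1 : G.step α β) (h2 : G.step α γ) :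
    β = γ ∨ ∃ δ, G.step β δ ∧ G.step γ δ := by
  obtain ⟨x, a, hx, rfl, rfl⟩ := h1
  obtain ⟨y, b, hy, hab, rfl⟩ := h2
  rcases eq_or_ne x y with rfl | hxy
  · left; rw [add_left_cancelF hab]
  · right
    have hay : a y ≠ 0 := by
      have := congrArg (fun f : G.F => f y) hab
      simp only [Finsupp.add_apply, Finsupp.single_eq_same,
        Finsupp.single_eq_of_ne' hxy] at this
      omega
    set τ := a - Finsupp.single y 1 with hτ
    have ha : a = Finsupp.single y 1 + τ := split_single a y hay
    have hb : b = Finsupp.single x 1 + τ := by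
      apply add_left_cancelF (a := Finsupp.single y 1)
      rw [← hab, ha]
      abel
    refine ⟨G.rr x + G.rr y + τ,
      ⟨y, G.rr x + τ, hy, by rw [ha]; abel, by abel⟩,
      ⟨x, G.rr y + τ, hx, by rw [hb]; abel, by abel⟩⟩

lemma cr_hyp : ∀ a b c : G.F, G.step a b → G.step a c →
    ∃ d, Relation.ReflGen G.step b d ∧ Relation.ReflTransGen G.step c d := by
  intro a b c h1 h2
  rcases diamond h1 h2 with rfl | ⟨δ, hb, hc⟩
  · exact ⟨b, Relation.ReflGen.refl, Relation.ReflTransGen.refl⟩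
  · exact ⟨δ, Relation.ReflGen.single hb, Relation.ReflTransGen.single hc⟩

/-- The congruence given by joinability. -/
def joinCon (G : RFGraph) : AddCon G.F where
  r α β := ∃ γ, G.steps α γ ∧ G.steps β γ
  iseqv := Relation.equivalence_join_reflTransGen cr_hyp
  add' := by
    rintro w x y z ⟨γ₁, hw, hx⟩ ⟨γ₂, hy, hz⟩
    exact ⟨γ₁ + γ₂, steps_add_add hw hy, steps_add_add hx hz⟩

lemma step_con {α β : G.F} (h : G.step α β) : G.graphCon α β :=
  AddConGen.Rel.of _ _ h

lemma steps_con {α β : G.F} (h : G.steps α β) : G.graphCon α β := by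
  induction h with
  | refl => exact G.graphCon.refl _
  | tail _ hbc ih => exact G.graphCon.trans ih (step_con hbc)

lemma con_iff {α β : G.F} : G.graphCon α β ↔ ∃ γ, G.steps α γ ∧ G.steps β γ := by
  constructor
  · intro h
    exact (AddCon.addConGen_le (c := G.joinCon)).mpr
      (fun x y hxy => ⟨y, Relation.ReflTransGen.single hxy, Relation.ReflTransGen.refl⟩) h
  · rintro ⟨γ, h1, h2⟩
    exact G.graphCon.trans (steps_con h1) (G.graphCon.symm (steps_con h2))

lemma mk'_eq_iff {α β : G.F} : G.graphCon.mk' α = G.graphCon.mk' β ↔ G.graphCon α β :=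
  G.graphCon.eq

/-! ### Support and hereditary/saturated sets -/

lemma rr_apply_ne_zero {x : G.V} {e : G.Edge} (he : G.s e = x) : G.rr x (G.r e) ≠ 0 := by
  unfold rr
  rw [Finsupp.finset_sum_apply]
  have hmem : e ∈ (G.rowFinite x).toFinset := by simp [he]
  have : (1 : ℕ) ≤ ∑ f ∈ (G.rowFinite x).toFinset, (Finsupp.single (G.r f) 1) (G.r e) := by
    refine Finset.single_le_sum (f := fun f => (Finsupp.single (G.r f) (1:ℕ)) (G.r e))
      (fun _ _ => Nat.zero_le _) hmem |>.trans_eq' ?_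
    rw [Finsupp.single_eq_same]
  omega

lemma mem_supp_rr {x w : G.V} (h : w ∈ (G.rr x).support) : ∃ e, G.s e = x ∧ G.r e = w := by
  unfold rr at h
  obtain ⟨e, he, hw⟩ := Finsupp.mem_support_finset_sum _ h
  rw [Set.Finite.mem_toFinset] at he
  have := Finsupp.support_single_subset hw
  simp only [Finset.mem_singleton] at this
  exact ⟨e, he, this.symm⟩

lemma step_supp_forward {H : Set G.V} (hH : G.Hereditary H) {α β : G.F} (h : G.step α β)
    (hs : ↑α.support ⊆ H) : ↑β.support ⊆ H := by
  obtain ⟨x, α', hx, rfl, rfl⟩ := h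
  have hxH : x ∈ H := by
    apply hs
    simp only [Finset.coe_sort_coe, Finset.mem_coe, Finsupp.mem_support_iff,
      Finsupp.add_apply, Finsupp.single_eq_same]
    omega
  intro w hw
  simp only [Finset.mem_coe, Finsupp.mem_support_iff, Finsupp.add_apply] at hw
  rcases Nat.eq_zero_or_pos (G.rr x w) with h0 | hpos
  · have : w ∈ α'.support := by
      rw [Finsupp.mem_support_iff]; omega
    apply hs
    simp only [Finset.mem_coe, Finsupp.mem_support_iff, Finsupp.add_apply]
    rw [Finsupp.mem_support_iff] at this
    omega
  · obtain ⟨e, he, rfl⟩ := mem_supp_rr (x := x) (w := w) (by rw [Finsupp.mem_support_iff]; omega)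
    exact hH x _ hxH (Relation.ReflTransGen.single ⟨e, he, rfl⟩)

lemma steps_supp_forward {H : Set G.V} (hH : G.Hereditary H) {α β : G.F} (h : G.steps α β)
    (hs : ↑α.support ⊆ H) : ↑β.support ⊆ H := by
  induction h with
  | refl => exact hs
  | tail _ hbc ih => exact step_supp_forward hH hbc ih

lemma step_supp_backward {H : Set G.V} (hS : G.Saturated H) {α β : G.F} (h : G.step α β)
    (hs : ↑β.support ⊆ H) : ↑α.support ⊆ H := by
  obtain ⟨x, α', hx, rfl, rfl⟩ := h
  have hxH : x ∈ H := by
    apply hS x hx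
    intro e he
    apply hs
    simp only [Finset.mem_coe, Finsupp.mem_support_iff, Finsupp.add_apply]
    have := rr_apply_ne_zero (G := G) he
    omega
  intro w hw
  simp only [Finset.mem_coe, Finsupp.mem_support_iff, Finsupp.add_apply] at hw
  rcases eq_or_ne w x with rfl | hwx
  · exact hxH
  · rw [Finsupp.single_eq_of_ne' (Ne.symm hwx)] at hw
    apply hs
    simp only [Finset.mem_coe, Finsupp.mem_support_iff, Finsupp.add_apply]
    omega

lemma steps_supp_backward {H : Set G.V} (hS : G.Saturated H) {α β : G.F} (h : G.steps α β)
    (hs : ↑β.support ⊆ H) : ↑α.support ⊆ H := by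
  induction h using Relation.ReflTransGen.head_induction_on with
  | refl => exact hs
  | head hst _ ih => exact step_supp_backward hS hst ih

/-! ### Splitting of rewriting sequences -/

lemma steps_split {σ δ : G.F} (h : G.steps σ δ) :
    ∀ α β, σ = α + β → ∃ δ₁ δ₂, G.steps α δ₁ ∧ G.steps β δ₂ ∧ δ = δ₁ + δ₂ := by
  induction h using Relation.ReflTransGen.head_induction_on with
  | refl =>
    intro α β h
    exact ⟨α, β, Relation.ReflTransGen.refl, Relation.ReflTransGen.refl, h⟩
  | head hst _ ih =>
    intro α β h
    obtain ⟨x, σ', hx, heq, rfl⟩ := hst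
    rw [h] at heq
    by_cases hα : α x ≠ 0
    · have hsplit : α = Finsupp.single x 1 + (α - Finsupp.single x 1) := split_single α x hα
      set α₂ := α - Finsupp.single x 1
      have hσ' : σ' = α₂ + β := by
        apply add_left_cancelF (a := Finsupp.single x 1)
        rw [← heq, hsplit]; abel
      obtain ⟨δ₁, δ₂, hd1, hd2, hdelta⟩ := ih (G.rr x + α₂) β (by rw [hσ']; abel)
      exact ⟨δ₁, δ₂, Relation.ReflTransGen.head ⟨x, α₂, hx, hsplit, rfl⟩ hd1, hd2, hdelta⟩
    · push_neg at hα
      have hβx : β x ≠ 0 := by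
        have := congrArg (fun f : G.F => f x) heq
        simp only [Finsupp.add_apply, Finsupp.single_eq_same] at this
        omega
      have hsplit : β = Finsupp.single x 1 + (β - Finsupp.single x 1) := split_single β x hβx
      set β₂ := β - Finsupp.single x 1
      have hσ' : σ' = α + β₂ := by
        apply add_left_cancelF (a := Finsupp.single x 1)
        rw [← heq, hsplit]; abel
      obtain ⟨δ₁, δ₂, hd1, hd2, hdelta⟩ := ih α (G.rr x + β₂) (by rw [hσ']; abel)
      exact ⟨δ₁, δ₂, hd1, Relation.ReflTransGen.head ⟨x, β₂, hx, hsplit, rfl⟩ hd2, hdelta⟩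

end RFGraph


namespace RFGraph

variable {G : RFGraph}

/-! ### Generated order-ideals -/

lemma mem_genOI_iff {S : Set G.M} {x : G.M} :
    x ∈ G.genOI S ↔ ∀ I : Set G.M, G.IsOrderIdeal I → S ⊆ I → x ∈ I := by
  simp [genOI, Set.mem_sInter, and_imp]

lemma genOI_isOrderIdeal (S : Set G.M) : G.IsOrderIdeal (G.genOI S) := by
  refine ⟨?_, ?_, ?_⟩
  · exact mem_genOI_iff.mpr fun I hI _ => hI.1
  · intro x y hx hy
    exact mem_genOI_iff.mpr fun I hI hS =>
      hI.2.1 _ _ (mem_genOI_iff.mp hx I hI hS) (mem_genOI_iff.mp hy I hI hS)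
  · intro x y hxy
    constructor
    · exact mem_genOI_iff.mpr fun I hI hS => (hI.2.2 x y (mem_genOI_iff.mp hxy I hI hS)).1
    · exact mem_genOI_iff.mpr fun I hI hS => (hI.2.2 x y (mem_genOI_iff.mp hxy I hI hS)).2

lemma subset_genOI {S : Set G.M} : S ⊆ G.genOI S :=
  fun _ hx => mem_genOI_iff.mpr fun _ _ hS => hS hx

lemma genOI_subset {S : Set G.M} {I : Set G.M} (hI : G.IsOrderIdeal I) (hS : S ⊆ I) :
    G.genOI S ⊆ I := fun _ hx => mem_genOI_iff.mp hx I hI hS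

/-! ### The explicit ideal attached to a hereditary saturated set -/

/-- The set of elements of `M_E` represented by some `α` with support in `H`. -/
def idealOf (G : RFGraph) (H : Set G.V) : Set G.M :=
  {m | ∃ α : G.F, m = G.graphCon.mk' α ∧ ↑α.support ⊆ H}

lemma av_mem_idealOf {H : Set G.V} {v : G.V} (hv : v ∈ H) : G.av v ∈ G.idealOf H := by
  refine ⟨Finsupp.single v 1, rfl, ?_⟩
  rw [Finsupp.support_single_ne_zero v one_ne_zero]
  simpa using hv

lemma idealOf_isOrderIdeal {H : Set G.V} (hH : G.Hereditary H) (hS : G.Saturated H) :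
    G.IsOrderIdeal (G.idealOf H) := by
  refine ⟨⟨0, (map_zero _).symm, by simp⟩, ?_, ?_⟩
  · rintro x y ⟨α, rfl, hα⟩ ⟨β, rfl, hβ⟩
    refine ⟨α + β, (map_add _ _ _).symm, ?_⟩
    intro w hw
    simp only [Finset.mem_coe, Finsupp.mem_support_iff, Finsupp.add_apply] at hw
    by_cases h : α w = 0
    · exact hβ (by simp only [Finset.mem_coe, Finsupp.mem_support_iff]; omega)
    · exact hα (by simp only [Finset.mem_coe, Finsupp.mem_support_iff]; omega)
  · intro x y hxy
    obtain ⟨α, rfl⟩ := AddCon.mk'_surjective x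
    obtain ⟨β, rfl⟩ := AddCon.mk'_surjective y
    obtain ⟨γ, hγ, hsupp⟩ := hxy
    rw [← map_add] at hγ
    obtain ⟨δ, h1, h2⟩ := con_iff.mp (mk'_eq_iff.mp hγ)
    have hδ : ↑δ.support ⊆ H := steps_supp_forward hH h2 hsupp
    obtain ⟨δ₁, δ₂, hd1, hd2, rfl⟩ := steps_split h1 α β rfl
    have hδ₁ : ↑δ₁.support ⊆ H := by
      intro w hw
      apply hδ
      simp only [Finset.mem_coe, Finsupp.mem_support_iff, Finsupp.add_apply] at hw ⊢
      omega
    have hδ₂ : ↑δ₂.support ⊆ H := by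
      intro w hw
      apply hδ
      simp only [Finset.mem_coe, Finsupp.mem_support_iff, Finsupp.add_apply] at hw ⊢
      omega
    exact ⟨⟨δ₁, mk'_eq_iff.mpr (steps_con hd1), hδ₁⟩,
      ⟨δ₂, mk'_eq_iff.mpr (steps_con hd2), hδ₂⟩⟩

lemma mem_of_av_mem_idealOf {H : Set G.V} (hH : G.Hereditary H) (hS : G.Saturated H)
    {v : G.V} (h : G.av v ∈ G.idealOf H) : v ∈ H := by
  obtain ⟨γ, hγ, hsupp⟩ := h
  obtain ⟨δ, h1, h2⟩ := con_iff.mp (mk'_eq_iff.mp hγ)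
  have hδ : ↑δ.support ⊆ H := steps_supp_forward hH h2 hsupp
  have := steps_supp_backward hS h1 hδ
  apply this
  rw [Finsupp.support_single_ne_zero v one_ne_zero]
  simp

/-! ### Sums and multiples in order-ideals -/

lemma sum_mem {I : Set G.M} (hI : G.IsOrderIdeal I) {ι : Type*} {s : Finset ι} {f : ι → G.M}
    (h : ∀ i ∈ s, f i ∈ I) : (∑ i ∈ s, f i) ∈ I := by
  classical
  induction s using Finset.induction_on with
  | empty => simpa using hI.1
  | @insert a s hni ih =>
    rw [Finset.sum_insert hni]
    exact hI.2.1 _ _ (h a (Finset.mem_insert_self _ _))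
      (ih fun i hi => h i (Finset.mem_insert_of_mem hi))

lemma mem_of_sum_mem {I : Set G.M} (hI : G.IsOrderIdeal I) {ι : Type*} {s : Finset ι}
    {f : ι → G.M} (h : (∑ i ∈ s, f i) ∈ I) : ∀ i ∈ s, f i ∈ I := by
  classical
  induction s using Finset.induction_on with
  | empty => simp
  | @insert a s hni ih =>
    rw [Finset.sum_insert hni] at h
    intro i hi
    rcases Finset.mem_insert.mp hi with rfl | hi
    · exact (hI.2.2 _ _ h).1
    · exact ih (hI.2.2 _ _ h).2 i hi

lemma nsmul_mem {I : Set G.M} (hI : G.IsOrderIdeal I) {x : G.M} (hx : x ∈ I) :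
    ∀ n : ℕ, n • x ∈ I := by
  intro n
  induction n with
  | zero => rw [zero_nsmul]; exact hI.1
  | succ n ih => rw [succ_nsmul]; exact hI.2.1 _ _ ih hx

lemma mem_of_nsmul_mem {I : Set G.M} (hI : G.IsOrderIdeal I) {x : G.M} {n : ℕ} (hn : n ≠ 0)
    (h : n • x ∈ I) : x ∈ I := by
  obtain ⟨m, rfl⟩ := Nat.exists_eq_succ_of_ne_zero hn
  rw [succ_nsmul] at h
  exact (hI.2.2 _ _ h).2

lemma mk'_single (v : G.V) (n : ℕ) :
    G.graphCon.mk' (Finsupp.single v n) = n • G.av v := by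
  have : Finsupp.single v n = n • Finsupp.single v 1 := by
    rw [Finsupp.smul_single]; simp
  rw [this, av, map_nsmul]

/-! ### ψ(I) is hereditary and saturated -/

lemma av_eq_sum {v : G.V} (hv : G.emits v) :
    G.av v = ∑ e ∈ (G.rowFinite v).toFinset, G.av (G.r e) := by
  have h1 : G.av v = G.graphCon.mk' (G.rr v) :=
    mk'_eq_iff.mpr (step_con ⟨v, 0, hv, (add_zero _).symm, (add_zero _).symm⟩)
  rw [h1, rr, map_sum]
  rfl

lemma phi_isOrderIdeal (H : Set G.V) : G.IsOrderIdeal (G.phiMap H) :=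
  genOI_isOrderIdeal _

lemma av_mem_phi {H : Set G.V} {v : G.V} (hv : v ∈ H) : G.av v ∈ G.phiMap H :=
  subset_genOI ⟨v, hv, rfl⟩

lemma psi_hereditary {I : Set G.M} (hI : G.IsOrderIdeal I) : G.Hereditary (G.psiMap I) := by
  intro v w hv hreach
  induction hreach with
  | refl => exact hv
  | @tail b c _ hbc ih =>
    obtain ⟨e, hse, hre⟩ := hbc
    have hb : G.av b ∈ I := ih
    rw [av_eq_sum ⟨e, hse⟩] at hb
    have := mem_of_sum_mem hI hb e (by simp [hse])
    rw [hre] at this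
    exact this

lemma psi_saturated {I : Set G.M} (hI : G.IsOrderIdeal I) : G.Saturated (G.psiMap I) := by
  intro v hv hall
  show G.av v ∈ I
  rw [av_eq_sum hv]
  refine sum_mem hI fun e he => ?_
  rw [Set.Finite.mem_toFinset] at he
  exact hall e he

end RFGraph


/-- `φ` and `ψ` are order-preserving mutually inverse bijections
between hereditary saturated subsets of `E⁰` and order-ideals of `M_E`. -/
theorem stmt9 (G : RFGraph) :
    (∀ H : Set G.V, G.Hereditary H → G.Saturated H → G.IsOrderIdeal (G.phiMap H)) ∧
    (∀ I : Set G.M, G.IsOrderIdeal I →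
        G.Hereditary (G.psiMap I) ∧ G.Saturated (G.psiMap I)) ∧
    (∀ H₁ H₂ : Set G.V, G.Hereditary H₁ → G.Saturated H₁ →
        G.Hereditary H₂ → G.Saturated H₂ → H₁ ⊆ H₂ → G.phiMap H₁ ⊆ G.phiMap H₂) ∧
    (∀ I₁ I₂ : Set G.M, G.IsOrderIdeal I₁ → G.IsOrderIdeal I₂ → I₁ ⊆ I₂ →
        G.psiMap I₁ ⊆ G.psiMap I₂) ∧
    (∀ H : Set G.V, G.Hereditary H → G.Saturated H → G.psiMap (G.phiMap H) = H) ∧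
    (∀ I : Set G.M, G.IsOrderIdeal I → G.phiMap (G.psiMap I) = I) := by
  refine ⟨fun H _ _ => RFGraph.genOI_isOrderIdeal _,
    fun I hI => ⟨RFGraph.psi_hereditary hI, RFGraph.psi_saturated hI⟩,
    ?_, ?_, ?_, ?_⟩
  · intro H₁ H₂ _ _ _ _ h
    exact RFGraph.genOI_subset (RFGraph.genOI_isOrderIdeal _)
      ((Set.image_mono h).trans RFGraph.subset_genOI)
  · intro I₁ I₂ _ _ h v hv
    exact h hv
  · intro H hH hS
    apply Set.Subset.antisymm
    · intro v hv
      have hsub : G.phiMap H ⊆ G.idealOf H := by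
        refine RFGraph.genOI_subset (RFGraph.idealOf_isOrderIdeal hH hS) ?_
        rintro _ ⟨w, hw, rfl⟩
        exact RFGraph.av_mem_idealOf hw
      exact RFGraph.mem_of_av_mem_idealOf hH hS (hsub hv)
    · intro v hv
      exact RFGraph.av_mem_phi hv
  · intro I hI
    apply Set.Subset.antisymm
    · refine RFGraph.genOI_subset hI ?_
      rintro _ ⟨v, hv, rfl⟩
      exact hv
    · intro x hx
      obtain ⟨α, rfl⟩ := AddCon.mk'_surjective x
      revert hx
      induction α using Finsupp.induction with
      | zero =>
        intro _
        simpa using (RFGraph.phi_isOrderIdeal (G := G) (G.psiMap I)).1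
      | single_add v n f _ hn ih =>
        intro h
        rw [map_add] at h ⊢
        obtain ⟨h1, h2⟩ := hI.2.2 _ _ h
        rw [RFGraph.mk'_single] at h1 ⊢
        have hav : G.av v ∈ I := RFGraph.mem_of_nsmul_mem hI hn h1
        have hgen : G.av v ∈ G.phiMap (G.psiMap I) := RFGraph.av_mem_phi hav
        have hns : n • G.av v ∈ G.phiMap (G.psiMap I) :=
          RFGraph.nsmul_mem (RFGraph.phi_isOrderIdeal _) hgen n
        exact (RFGraph.phi_isOrderIdeal _).2.1 _ _ hns (ih h2)
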